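/- arXiv:2605.00148 — 6 statements merged into one kernel-verified Lean document; each statement's English description precedes it below -/
import Mathlib

section
/- Let X be a topological space, A a positive bounded linear operator on X →ᵇ ℝ, and U ∈ X →ᵇ ℝ with U ≥ 0. Set S = A − M_U. Then for every t ≥ 0 the operator exp(t S) is positive: for every f ∈ X →ᵇ ℝ with f ≥ 0 one has exp(t S) f ≥ 0. (Lemma 4.1(i), positivity of the perturbed semigroup e^{tS_n} with S_n = Â − U.) -/
open BoundedContinuousFunction

/-- The `TopologicalRing` instance on endomorphisms of `X →ᵇ ℝ`, provided here to help
instance synthesis for the operator exponential. -/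
instance {X : Type*} [TopologicalSpace X] :
    IsTopologicalRing ((X →ᵇ ℝ) →L[ℝ] (X →ᵇ ℝ)) :=
  letI : SeminormedRing ((X →ᵇ ℝ) →L[ℝ] (X →ᵇ ℝ)) := inferInstance
  inferInstance

open NormedSpace in
theorem exp_pos_of_pos
    {X : Type*} [TopologicalSpace X]
    (B : (X →ᵇ ℝ) →L[ℝ] (X →ᵇ ℝ))
    (hB : ∀ f : X →ᵇ ℝ, 0 ≤ f → 0 ≤ B f)
    (f : X →ᵇ ℝ) (hf : 0 ≤ f) :
    0 ≤ NormedSpace.exp B f := by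
  intro x
  have hpow : ∀ n : ℕ, 0 ≤ (B ^ n) f := by
    intro n
    induction n with
    | zero => simpa using hf
    | succ n ih => rw [pow_succ']; exact hB _ ih
  -- map exp through evaluation
  let ψ : ((X →ᵇ ℝ) →L[ℝ] (X →ᵇ ℝ)) →L[ℝ] ℝ :=
    (evalCLM ℝ x).comp (ContinuousLinearMap.apply ℝ (X →ᵇ ℝ) f)
  have hsum := exp_series_hasSum_exp' (𝕂 := ℝ) B
  have h2 : HasSum (fun n : ℕ => ψ (((Nat.factorial n : ℝ))⁻¹ • B ^ n)) (ψ (exp B)) :=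
    hsum.mapL ψ
  have : (0:ℝ) ≤ ψ (exp B) := by
    refine h2.nonneg fun n => ?_
    simp only [ψ, map_smul, ContinuousLinearMap.coe_comp', Function.comp_apply,
      ContinuousLinearMap.apply_apply, evalCLM_apply, smul_eq_mul]
    exact mul_nonneg (by positivity) (hpow n x)
  exact this

set_option maxHeartbeats 1000000 in
set_option synthInstance.maxHeartbeats 400000 in
/-- Lemma 4.1(i): positivity of the perturbed semigroup `e^{tS}` with `S = A - M_U`. -/
theorem exp_perturbed_positive
    {X : Type*} [TopologicalSpace X]
    (A : (X →ᵇ ℝ) →L[ℝ] (X →ᵇ ℝ))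
    (hA : ∀ f : X →ᵇ ℝ, 0 ≤ f → 0 ≤ A f)
    (U : X →ᵇ ℝ) (hU : 0 ≤ U)
    (S : (X →ᵇ ℝ) →L[ℝ] (X →ᵇ ℝ))
    (hS : S = A - ContinuousLinearMap.mul ℝ (X →ᵇ ℝ) U)
    (t : ℝ) (ht : 0 ≤ t)
    (f : X →ᵇ ℝ) (hf : 0 ≤ f) :
    0 ≤ NormedSpace.exp (t • S) f := by
  set c : ℝ := ‖U‖ with hc
  set V : X →ᵇ ℝ := c • 1 - U with hV
  have hVpos : 0 ≤ V := by
    intro x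
    have h := U.norm_coe_le_norm x
    rw [Real.norm_eq_abs, abs_le] at h
    show (0 : ℝ) ≤ V x
    simp only [hV, BoundedContinuousFunction.coe_sub, BoundedContinuousFunction.coe_smul,
      BoundedContinuousFunction.coe_one, Pi.sub_apply, Pi.smul_apply, Pi.one_apply,
      smul_eq_mul, mul_one]
    linarith [h.2]
  set B : (X →ᵇ ℝ) →L[ℝ] (X →ᵇ ℝ) := A + ContinuousLinearMap.mul ℝ (X →ᵇ ℝ) V with hB
  have hBpos : ∀ g : X →ᵇ ℝ, 0 ≤ g → 0 ≤ B g := by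
    intro g hg
    have h1 : 0 ≤ A g := hA g hg
    have h2 : 0 ≤ V * g := by
      intro x
      simpa using mul_nonneg (hVpos x) (hg x)
    calc (0 : X →ᵇ ℝ) ≤ A g + V * g := by
          intro x
          simpa using add_nonneg (h1 x) (h2 x)
      _ = B g := by simp [hB, ContinuousLinearMap.mul_apply']
  have hdecomp : t • S
      = algebraMap ℝ ((X →ᵇ ℝ) →L[ℝ] (X →ᵇ ℝ)) (-(t * c)) + t • B := by
    rw [hS, hB, Algebra.algebraMap_eq_smul_one]
    ext g x
    simp only [ContinuousLinearMap.smul_apply, ContinuousLinearMap.add_apply,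
      ContinuousLinearMap.sub_apply, ContinuousLinearMap.one_apply,
      ContinuousLinearMap.mul_apply', hV,
      BoundedContinuousFunction.coe_smul, BoundedContinuousFunction.coe_sub,
      BoundedContinuousFunction.coe_add, BoundedContinuousFunction.coe_mul,
      BoundedContinuousFunction.coe_one, Pi.smul_apply, Pi.sub_apply, Pi.add_apply,
      Pi.mul_apply, Pi.one_apply, smul_eq_mul]
    ring
  have hcomm : Commute (algebraMap ℝ ((X →ᵇ ℝ) →L[ℝ] (X →ᵇ ℝ)) (-(t * c))) (t • B) :=
    Algebra.commutes _ _
  let +nondep : NormedAlgebra ℚ ((X →ᵇ ℝ) →L[ℝ] (X →ᵇ ℝ)) := .restrictScalars ℚ ℝ _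
  have hadd := NormedSpace.exp_add_of_commute
    (𝔸 := (X →ᵇ ℝ) →L[ℝ] (X →ᵇ ℝ)) hcomm
  have he := NormedSpace.algebraMap_exp_comm
    (𝕂 := ℝ) (𝔸 := (X →ᵇ ℝ) →L[ℝ] (X →ᵇ ℝ)) (-(t * c))
  rw [hdecomp, hadd, ← he]
  have hexpB : 0 ≤ NormedSpace.exp (t • B) f := by
    refine exp_pos_of_pos (t • B) ?_ f hf
    intro g hg x
    have h3 := hBpos g hg x
    show (0 : ℝ) ≤ ((t • B) g) x
    have h6 : ((t • B) g) x = t * ((B g) x) := rfl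
    rw [h6]
    exact mul_nonneg ht (by simpa using h3)
  have hkey : (algebraMap ℝ ((X →ᵇ ℝ) →L[ℝ] (X →ᵇ ℝ)) (NormedSpace.exp (-(t * c)))
        * NormedSpace.exp (t • B)) f
      = NormedSpace.exp (-(t * c)) • (NormedSpace.exp (t • B) f) := by
    rw [ContinuousLinearMap.mul_apply, Algebra.algebraMap_eq_smul_one]
    rfl
  rw [hkey]
  intro x
  have h4 : (0:ℝ) ≤ NormedSpace.exp (-(t * c)) := by
    rw [← Real.exp_eq_exp_ℝ]
    exact (Real.exp_pos _).le
  have h5 := hexpB x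
  have : (NormedSpace.exp (-(t * c)) • (NormedSpace.exp (t • B) f)) x
      = NormedSpace.exp (-(t * c)) * ((NormedSpace.exp (t • B) f) x) := rfl
  show (0 : ℝ) ≤ (NormedSpace.exp (-(t * c)) • (NormedSpace.exp (t • B) f)) x
  rw [this]
  exact mul_nonneg h4 (by simpa using h5)
end

section
/- Let X be a topological space, A a positive bounded linear operator on X →ᵇ ℝ, and U ∈ X →ᵇ ℝ with U ≥ 0. Set S = A − M_U. Then for every t ≥ 0 and every f ∈ X →ᵇ ℝ with f ≥ 0 one has exp(t S) f ≥ exp(−t‖U‖) · (exp(t A) f), where exp(−t‖U‖) is the real scalar exponential. (Inequality (20L) in the proof of Lemma 4.1, obtained via the Trotter formula.) -/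
open BoundedContinuousFunction

section Aux

set_option maxHeartbeats 1000000

variable {X : Type*} [TopologicalSpace X]

lemma aux_le_iff {f g : X →ᵇ ℝ} : f ≤ g ↔ ∀ x, f x ≤ g x := Iff.rfl

lemma aux_pow_smul_one_apply (r : ℝ) (n : ℕ) (f : X →ᵇ ℝ) :
    ((r • (1 : (X →ᵇ ℝ) →L[ℝ] (X →ᵇ ℝ))) ^ n) f = r ^ n • f := by
  induction n with
  | zero => simp
  | succ n ih =>
    rw [pow_succ, ContinuousLinearMap.mul_apply, ContinuousLinearMap.smul_apply,
      ContinuousLinearMap.one_apply, map_smul, ih, smul_smul, pow_succ, mul_comm]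

lemma aux_exp_apply_hasSum (T : (X →ᵇ ℝ) →L[ℝ] (X →ᵇ ℝ)) (f : X →ᵇ ℝ) :
    HasSum (fun n : ℕ => ((Nat.factorial n : ℝ))⁻¹ • (T ^ n) f) (NormedSpace.exp T f) := by
  have h := NormedSpace.exp_series_hasSum_exp' (𝕂 := ℝ) T
  have h2 := h.mapL (ContinuousLinearMap.apply ℝ (X →ᵇ ℝ) f)
  simpa using h2

lemma aux_exp_smul_one_apply (r : ℝ) (f : X →ᵇ ℝ) :
    NormedSpace.exp (r • (1 : (X →ᵇ ℝ) →L[ℝ] (X →ᵇ ℝ))) f = Real.exp r • f := by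
  have h' := aux_exp_apply_hasSum (r • (1 : (X →ᵇ ℝ) →L[ℝ] (X →ᵇ ℝ))) f
  simp_rw [aux_pow_smul_one_apply, smul_smul] at h'
  have hr : HasSum (fun n : ℕ => ((Nat.factorial n : ℝ))⁻¹ * r ^ n) (Real.exp r) := by
    have := NormedSpace.exp_series_hasSum_exp' (𝕂 := ℝ) r
    rw [← Real.exp_eq_exp_ℝ] at this
    simpa [smul_eq_mul] using this
  have h2 := hr.mapL (ContinuousLinearMap.toSpanSingleton ℝ f)
  simp only [ContinuousLinearMap.toSpanSingleton_apply] at h2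
  exact h'.unique h2

lemma aux_pow_le (B C : (X →ᵇ ℝ) →L[ℝ] (X →ᵇ ℝ))
    (hB : ∀ f : X →ᵇ ℝ, 0 ≤ f → 0 ≤ B f)
    (hBC : ∀ f : X →ᵇ ℝ, 0 ≤ f → B f ≤ C f) (n : ℕ) :
    ∀ f : X →ᵇ ℝ, 0 ≤ f → 0 ≤ (B ^ n) f ∧ (B ^ n) f ≤ (C ^ n) f := by
  induction n with
  | zero => intro f hf; exact ⟨hf, le_refl _⟩
  | succ n ih =>
    intro f hf
    rw [pow_succ, pow_succ, ContinuousLinearMap.mul_apply, ContinuousLinearMap.mul_apply]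
    obtain ⟨h1, h2⟩ := ih (B f) (hB f hf)
    refine ⟨h1, le_trans h2 ?_⟩
    have h4 : (0 : X →ᵇ ℝ) ≤ C f - B f := sub_nonneg.2 (hBC f hf)
    have h6 := le_trans (ih _ h4).1 (ih _ h4).2
    rw [map_sub] at h6
    exact sub_nonneg.1 h6

lemma aux_exp_mono (B C : (X →ᵇ ℝ) →L[ℝ] (X →ᵇ ℝ))
    (hB : ∀ f : X →ᵇ ℝ, 0 ≤ f → 0 ≤ B f)
    (hBC : ∀ f : X →ᵇ ℝ, 0 ≤ f → B f ≤ C f) (f : X →ᵇ ℝ) (hf : 0 ≤ f) :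
    NormedSpace.exp B f ≤ NormedSpace.exp C f := by
  rw [aux_le_iff]
  intro x
  have hsB := (aux_exp_apply_hasSum B f).mapL (BoundedContinuousFunction.evalCLM ℝ x)
  have hsC := (aux_exp_apply_hasSum C f).mapL (BoundedContinuousFunction.evalCLM ℝ x)
  simp only [map_smul, BoundedContinuousFunction.evalCLM_apply, smul_eq_mul] at hsB hsC
  refine hasSum_le (fun n => ?_) hsB hsC
  have h := aux_pow_le B C hB hBC n f hf
  have hx : ((B ^ n) f) x ≤ ((C ^ n) f) x := (aux_le_iff.1 h.2) x
  have hnn : (0:ℝ) ≤ ((Nat.factorial n : ℝ))⁻¹ := by positivity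
  exact mul_le_mul_of_nonneg_left hx hnn

end Aux

set_option maxHeartbeats 1000000 in
/-- Inequality (20L): `exp(tS) f ≥ exp(-t‖U‖) • exp(tA) f` for `S = A - M_U`, `f ≥ 0`. -/
theorem exp_perturbed_lower_bound
    {X : Type*} [TopologicalSpace X]
    (A : (X →ᵇ ℝ) →L[ℝ] (X →ᵇ ℝ))
    (hA : ∀ f : X →ᵇ ℝ, 0 ≤ f → 0 ≤ A f)
    (U : X →ᵇ ℝ) (hU : 0 ≤ U)
    (S : (X →ᵇ ℝ) →L[ℝ] (X →ᵇ ℝ))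
    (hS : S = A - ContinuousLinearMap.mul ℝ (X →ᵇ ℝ) U)
    (t : ℝ) (ht : 0 ≤ t)
    (f : X →ᵇ ℝ) (hf : 0 ≤ f) :
    Real.exp (-t * ‖U‖) • (NormedSpace.exp (t • A) f) ≤ NormedSpace.exp (t • S) f := by
  set C : (X →ᵇ ℝ) →L[ℝ] (X →ᵇ ℝ) := S + ‖U‖ • 1 with hC
  have hAC : ∀ g : X →ᵇ ℝ, 0 ≤ g → A g ≤ C g := by
    intro g hg
    rw [hC, hS, aux_le_iff]
    intro x
    simp only [ContinuousLinearMap.add_apply, ContinuousLinearMap.sub_apply,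
      ContinuousLinearMap.smul_apply, ContinuousLinearMap.one_apply,
      ContinuousLinearMap.mul_apply', BoundedContinuousFunction.coe_add,
      BoundedContinuousFunction.coe_sub, BoundedContinuousFunction.coe_smul,
      BoundedContinuousFunction.coe_mul, Pi.add_apply, Pi.sub_apply, Pi.smul_apply,
      Pi.mul_apply, smul_eq_mul]
    have h1 : U x ≤ ‖U‖ := le_trans (le_abs_self _) (U.norm_coe_le_norm x)
    have h2 : 0 ≤ g x := (aux_le_iff.1 hg) x
    nlinarith
  have hCpos : ∀ g : X →ᵇ ℝ, 0 ≤ g → 0 ≤ C g := fun g hg =>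
    le_trans (hA g hg) (hAC g hg)
  have htA : ∀ g : X →ᵇ ℝ, 0 ≤ g → 0 ≤ (t • A) g := by
    intro g hg
    rw [ContinuousLinearMap.smul_apply, aux_le_iff]
    intro x
    simpa using mul_nonneg ht ((aux_le_iff.1 (hA g hg)) x)
  have htAC : ∀ g : X →ᵇ ℝ, 0 ≤ g → (t • A) g ≤ (t • C) g := by
    intro g hg
    rw [ContinuousLinearMap.smul_apply, ContinuousLinearMap.smul_apply, aux_le_iff]
    intro x
    simpa using mul_le_mul_of_nonneg_left ((aux_le_iff.1 (hAC g hg)) x) ht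
  -- factorization of `exp (t • S)`
  have hsum2 : t • S = t • C + (-(t * ‖U‖)) • (1 : (X →ᵇ ℝ) →L[ℝ] (X →ᵇ ℝ)) := by
    rw [hC]
    refine ContinuousLinearMap.ext fun g => ?_
    ext x
    simp only [ContinuousLinearMap.smul_apply, ContinuousLinearMap.add_apply,
      ContinuousLinearMap.one_apply, BoundedContinuousFunction.coe_add,
      BoundedContinuousFunction.coe_smul, Pi.add_apply, Pi.smul_apply, smul_eq_mul]
    ring
  letI : NormedAlgebra ℚ ((X →ᵇ ℝ) →L[ℝ] (X →ᵇ ℝ)) :=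
    NormedAlgebra.restrictScalars ℚ ℝ ((X →ᵇ ℝ) →L[ℝ] (X →ᵇ ℝ))
  have key := NormedSpace.exp_add_of_commute (x := t • C)
    (y := (-(t * ‖U‖)) • (1 : (X →ᵇ ℝ) →L[ℝ] (X →ᵇ ℝ)))
    (by refine ContinuousLinearMap.ext fun g => ?_
        simp only [ContinuousLinearMap.mul_apply, ContinuousLinearMap.smul_apply,
          ContinuousLinearMap.one_apply, map_smul, smul_smul, mul_comm])
  have hfac : NormedSpace.exp (t • S) f
      = Real.exp (-(t * ‖U‖)) • NormedSpace.exp (t • C) f := by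
    have h0 : NormedSpace.exp (t • S)
        = NormedSpace.exp (t • C) * NormedSpace.exp
          ((-(t * ‖U‖)) • (1 : (X →ᵇ ℝ) →L[ℝ] (X →ᵇ ℝ))) := by
      rw [hsum2]; exact key
    rw [h0, ContinuousLinearMap.mul_apply, aux_exp_smul_one_apply, map_smul]
  rw [hfac, neg_mul]
  have hle := aux_exp_mono (t • A) (t • C) htA htAC f hf
  rw [aux_le_iff] at hle ⊢
  intro x
  simp only [BoundedContinuousFunction.coe_smul, Pi.smul_apply, smul_eq_mul]
  exact mul_le_mul_of_nonneg_left (hle x) (Real.exp_nonneg _)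
end

section
/- Let X be a topological space, A a positive bounded linear operator on X →ᵇ ℝ, and U, W ∈ X →ᵇ ℝ with U ≥ 0 and W ≥ 0. Set S = A − M_U − M_W and L = A − M_U (so L = S + M_W). Then for every t ≥ 0 and every f ∈ X →ᵇ ℝ with f ≥ 0 one has exp(t S) f ≤ exp(t L) f. (Lemma 4.1(ii): domination e^{tS_n} f ≤ e^{t L̂*_n} f of the perturbed semigroup by the unperturbed one.) -/
open BoundedContinuousFunction

private theorem bcf_le_of_forall {X : Type*} [TopologicalSpace X] {g h : X →ᵇ ℝ}
    (H : ∀ x, g x ≤ h x) : g ≤ h := H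

set_option maxHeartbeats 2000000 in
set_option synthInstance.maxHeartbeats 400000 in
/-- Lemma 4.1(ii): domination `e^{tS} f ≤ e^{tL} f` where `S = A - M_U - M_W` and
`L = A - M_U`, for `f ≥ 0`. -/
theorem exp_perturbed_dominated
    {X : Type*} [TopologicalSpace X]
    (A : (X →ᵇ ℝ) →L[ℝ] (X →ᵇ ℝ))
    (hA : ∀ f : X →ᵇ ℝ, 0 ≤ f → 0 ≤ A f)
    (U W : X →ᵇ ℝ) (hU : 0 ≤ U) (hW : 0 ≤ W)
    (S L : (X →ᵇ ℝ) →L[ℝ] (X →ᵇ ℝ))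
    (hS : S = A - ContinuousLinearMap.mul ℝ (X →ᵇ ℝ) U - ContinuousLinearMap.mul ℝ (X →ᵇ ℝ) W)
    (hL : L = A - ContinuousLinearMap.mul ℝ (X →ᵇ ℝ) U)
    (t : ℝ) (ht : 0 ≤ t)
    (f : X →ᵇ ℝ) (hf : 0 ≤ f) :
    NormedSpace.exp (t • S) f ≤ NormedSpace.exp (t • L) f := by
  set c : ℝ := ‖U‖ + ‖W‖ with hc
  set P : (X →ᵇ ℝ) →L[ℝ] (X →ᵇ ℝ) := S + algebraMap ℝ _ c with hP
  set Q : (X →ᵇ ℝ) →L[ℝ] (X →ᵇ ℝ) := L + algebraMap ℝ _ c with hQ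
  have smul_mono : ∀ (a : ℝ) (g h : X →ᵇ ℝ), 0 ≤ a → g ≤ h → a • g ≤ a • h := by
    intro a g h ha hgh
    refine bcf_le_of_forall fun x => ?_
    simp only [BoundedContinuousFunction.coe_smul, Pi.smul_apply, smul_eq_mul]
    exact mul_le_mul_of_nonneg_left (hgh x) ha
  have hPpos : ∀ g : X →ᵇ ℝ, 0 ≤ g → 0 ≤ P g := by
    intro g hg
    have h1 : (0 : X →ᵇ ℝ) ≤ A g := hA g hg
    have h2 : (0 : X →ᵇ ℝ) ≤ c • g - U * g - W * g := by
      refine bcf_le_of_forall fun x => ?_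
      have hUx : U x ≤ ‖U‖ := le_trans (le_abs_self _) (U.norm_coe_le_norm x)
      have hWx : W x ≤ ‖W‖ := le_trans (le_abs_self _) (W.norm_coe_le_norm x)
      have hgx : 0 ≤ g x := hg x
      have hcx : U x + W x ≤ c := by rw [hc]; linarith
      simp only [BoundedContinuousFunction.coe_zero, Pi.zero_apply,
        BoundedContinuousFunction.coe_sub, Pi.sub_apply,
        BoundedContinuousFunction.coe_smul, Pi.smul_apply, smul_eq_mul,
        BoundedContinuousFunction.coe_mul, Pi.mul_apply]
      nlinarith
    have hrw : P g = A g + (c • g - U * g - W * g) := by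
      simp only [hP, hS, ContinuousLinearMap.add_apply, ContinuousLinearMap.sub_apply,
        ContinuousLinearMap.mul_apply', Algebra.algebraMap_eq_smul_one,
        ContinuousLinearMap.smul_apply, ContinuousLinearMap.one_apply]
      ring
    rw [hrw]
    exact add_nonneg h1 h2
  have hQpos : ∀ g : X →ᵇ ℝ, 0 ≤ g → 0 ≤ Q g := by
    intro g hg
    have h1 : (0 : X →ᵇ ℝ) ≤ A g := hA g hg
    have h2 : (0 : X →ᵇ ℝ) ≤ c • g - U * g := by
      refine bcf_le_of_forall fun x => ?_
      have hUx : U x ≤ ‖U‖ := le_trans (le_abs_self _) (U.norm_coe_le_norm x)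
      have hWn : (0:ℝ) ≤ ‖W‖ := norm_nonneg _
      have hgx : 0 ≤ g x := hg x
      have hcx : U x ≤ c := by rw [hc]; linarith
      simp only [BoundedContinuousFunction.coe_zero, Pi.zero_apply,
        BoundedContinuousFunction.coe_sub, Pi.sub_apply,
        BoundedContinuousFunction.coe_smul, Pi.smul_apply, smul_eq_mul,
        BoundedContinuousFunction.coe_mul, Pi.mul_apply]
      nlinarith
    have hrw : Q g = A g + (c • g - U * g) := by
      simp only [hQ, hL, ContinuousLinearMap.add_apply, ContinuousLinearMap.sub_apply,
        ContinuousLinearMap.mul_apply', Algebra.algebraMap_eq_smul_one,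
        ContinuousLinearMap.smul_apply, ContinuousLinearMap.one_apply]
      ring
    rw [hrw]
    exact add_nonneg h1 h2
  have hPQ : ∀ g : X →ᵇ ℝ, 0 ≤ g → P g ≤ Q g := by
    intro g hg
    have hrw : Q g = P g + W * g := by
      simp only [hP, hQ, hS, hL, ContinuousLinearMap.add_apply, ContinuousLinearMap.sub_apply,
        ContinuousLinearMap.mul_apply']
      ring
    rw [hrw]
    have hWg : (0 : X →ᵇ ℝ) ≤ W * g := by
      refine bcf_le_of_forall fun x => ?_
      simp only [BoundedContinuousFunction.coe_zero, Pi.zero_apply,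
        BoundedContinuousFunction.coe_mul, Pi.mul_apply]
      exact mul_nonneg (hW x) (hg x)
    exact le_add_of_nonneg_right hWg
  have hiter : ∀ n : ℕ, (0 ≤ (P ^ n) f) ∧ (0 ≤ (Q ^ n) f) ∧ ((P ^ n) f ≤ (Q ^ n) f) := by
    intro n
    induction n with
    | zero => simp [hf]
    | succ n ih =>
      obtain ⟨h1, h2, h3⟩ := ih
      have e1 : (P ^ (n+1)) f = P ((P ^ n) f) := by rw [pow_succ']; rfl
      have e2 : (Q ^ (n+1)) f = Q ((Q ^ n) f) := by rw [pow_succ']; rfl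
      refine ⟨?_, ?_, ?_⟩
      · rw [e1]; exact hPpos _ h1
      · rw [e2]; exact hQpos _ h2
      · rw [e1, e2]
        calc P ((P ^ n) f) ≤ P ((Q ^ n) f) := by
              have hsub : (0:X →ᵇ ℝ) ≤ P ((Q ^ n) f) - P ((P ^ n) f) := by
                rw [← map_sub]
                exact hPpos _ (sub_nonneg.mpr h3)
              exact sub_nonneg.mp hsub
          _ ≤ Q ((Q ^ n) f) := hPQ _ h2
  -- express exp (t•S) via exp (t•P)
  have hcomm : ∀ (T : (X →ᵇ ℝ) →L[ℝ] (X →ᵇ ℝ)) (a : ℝ),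
      Commute (t • T + algebraMap ℝ _ a) (algebraMap ℝ _ (-a)) :=
    fun T a => (Algebra.commute_algebraMap_right _ _)
  have key : ∀ T : (X →ᵇ ℝ) →L[ℝ] (X →ᵇ ℝ),
      NormedSpace.exp (t • T)
        = NormedSpace.exp (t • (T + algebraMap ℝ _ c)) * algebraMap ℝ _ (Real.exp (-(t*c))) := by
    intro T
    have hsplit : t • T = t • (T + algebraMap ℝ _ c) + algebraMap ℝ _ (-(t*c)) := by
      simp only [Algebra.algebraMap_eq_smul_one, smul_add, smul_smul]
      module
    have hcomm : Commute (t • (T + algebraMap ℝ ((X →ᵇ ℝ) →L[ℝ] (X →ᵇ ℝ)) c))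
        (algebraMap ℝ ((X →ᵇ ℝ) →L[ℝ] (X →ᵇ ℝ)) (-(t*c))) :=
      Algebra.commute_algebraMap_right _ _
    have h1 := NormedSpace.exp_add_of_commute_of_mem_ball (𝕂 := ℝ)
      (𝔸 := (X →ᵇ ℝ) →L[ℝ] (X →ᵇ ℝ)) hcomm
      ((NormedSpace.expSeries_radius_eq_top ℝ ((X →ᵇ ℝ) →L[ℝ] (X →ᵇ ℝ))).symm ▸ edist_lt_top _ _)
      ((NormedSpace.expSeries_radius_eq_top ℝ ((X →ᵇ ℝ) →L[ℝ] (X →ᵇ ℝ))).symm ▸ edist_lt_top _ _)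
    have h2 : NormedSpace.exp (algebraMap ℝ ((X →ᵇ ℝ) →L[ℝ] (X →ᵇ ℝ)) (-(t*c)))
        = algebraMap ℝ ((X →ᵇ ℝ) →L[ℝ] (X →ᵇ ℝ)) (Real.exp (-(t*c))) := by
      rw [Real.exp_eq_exp_ℝ]
      exact (NormedSpace.algebraMap_exp_comm (𝕂 := ℝ)
        (𝔸 := (X →ᵇ ℝ) →L[ℝ] (X →ᵇ ℝ)) _).symm
    rw [hsplit, h1, h2]
  have happ : ∀ (T : (X →ᵇ ℝ) →L[ℝ] (X →ᵇ ℝ)) (a : ℝ) (g : X →ᵇ ℝ),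
      (T * algebraMap ℝ _ a) g = a • T g := by
    intro T a g
    simp [ContinuousLinearMap.mul_apply, Algebra.algebraMap_eq_smul_one]
  have hSP : NormedSpace.exp (t • S) f
      = Real.exp (-(t*c)) • NormedSpace.exp (t • P) f := by
    rw [hP, key S, happ]
  have hLQ : NormedSpace.exp (t • L) f
      = Real.exp (-(t*c)) • NormedSpace.exp (t • Q) f := by
    rw [hQ, key L, happ]
  rw [hSP, hLQ]
  refine smul_mono _ _ _ (Real.exp_nonneg _) ?_
  -- compare exp (t•P) f ≤ exp (t•Q) f via tsum
  have hsumP : Summable fun n : ℕ => (((n.factorial : ℝ))⁻¹) • (t • P) ^ n :=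
    NormedSpace.expSeries_summable' (𝕂 := ℝ) (t • P)
  have hsumQ : Summable fun n : ℕ => (((n.factorial : ℝ))⁻¹) • (t • Q) ^ n :=
    NormedSpace.expSeries_summable' (𝕂 := ℝ) (t • Q)
  have evalf := ContinuousLinearMap.apply ℝ (X →ᵇ ℝ) f
  have hexp_apply : ∀ (T : (X →ᵇ ℝ) →L[ℝ] (X →ᵇ ℝ)),
      Summable (fun n : ℕ => (((n.factorial : ℝ))⁻¹) • T ^ n) →
      NormedSpace.exp T f = ∑' n : ℕ, (((n.factorial : ℝ))⁻¹) • ((T ^ n) f) := by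
    intro T h
    rw [NormedSpace.exp_eq_tsum ℝ]
    have := (ContinuousLinearMap.apply ℝ (X →ᵇ ℝ) f).map_tsum h
    simpa using this
  have hsumPf : Summable fun n : ℕ => (((n.factorial : ℝ))⁻¹) • (((t • P) ^ n) f) := by
    have := hsumP.map (ContinuousLinearMap.apply ℝ (X →ᵇ ℝ) f)
      (ContinuousLinearMap.apply ℝ (X →ᵇ ℝ) f).continuous
    simpa [Function.comp_def] using this
  have hsumQf : Summable fun n : ℕ => (((n.factorial : ℝ))⁻¹) • (((t • Q) ^ n) f) := by
    have := hsumQ.map (ContinuousLinearMap.apply ℝ (X →ᵇ ℝ) f)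
      (ContinuousLinearMap.apply ℝ (X →ᵇ ℝ) f).continuous
    simpa [Function.comp_def] using this
  rw [hexp_apply _ hsumP, hexp_apply _ hsumQ]
  refine Summable.tsum_le_tsum ?_ hsumPf hsumQf
  intro n
  have hpow : ∀ (T : (X →ᵇ ℝ) →L[ℝ] (X →ᵇ ℝ)), ((t • T) ^ n) f = t ^ n • ((T ^ n) f) := by
    intro T
    induction n with
    | zero => simp
    | succ m ih =>
      have e : ∀ (R : (X →ᵇ ℝ) →L[ℝ] (X →ᵇ ℝ)) (k : ℕ), (R ^ (k+1)) f = R ((R ^ k) f) :=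
        fun R k => by rw [pow_succ']; rfl
      rw [e, e, ih, ContinuousLinearMap.smul_apply, map_smul, smul_smul]
      rw [← pow_succ']
  rw [hpow P, hpow Q]
  refine smul_mono _ _ _ (by positivity) ?_
  exact smul_mono _ _ _ (pow_nonneg ht n) (hiter n).2.2
end

section
/- Let X be a topological space and P a positive bounded linear operator on X →ᵇ ℝ. Then for every t ≥ 0 and every f ∈ X →ᵇ ℝ with f ≥ 0 one has exp(t P) f ≥ f; in particular exp(t P) f ≥ 0. (Positivity of the exponential of a positivity-preserving bounded operator, used in the proof of Lemma 4.1.) -/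
open BoundedContinuousFunction

/-- Positivity of the exponential of a positivity-preserving bounded operator:
`exp(tP) f ≥ f` and in particular `exp(tP) f ≥ 0` for `f ≥ 0`. -/
theorem exp_positive_operator
    {X : Type*} [TopologicalSpace X]
    (P : (X →ᵇ ℝ) →L[ℝ] (X →ᵇ ℝ))
    (hP : ∀ f : X →ᵇ ℝ, 0 ≤ f → 0 ≤ P f)
    (t : ℝ) (ht : 0 ≤ t)
    (f : X →ᵇ ℝ) (hf : 0 ≤ f) :
    f ≤ NormedSpace.exp (t • P) f ∧ 0 ≤ NormedSpace.exp (t • P) f := by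
  set T : (X →ᵇ ℝ) →L[ℝ] (X →ᵇ ℝ) := t • P with hT
  have hTpos : ∀ g : X →ᵇ ℝ, 0 ≤ g → 0 ≤ T g := by
    intro g hg
    have hpg := hP g hg
    intro x
    simpa [hT] using mul_nonneg ht (hpg x)
  have hpow : ∀ n : ℕ, ∀ g : X →ᵇ ℝ, 0 ≤ g → 0 ≤ (T ^ n) g := by
    intro n
    induction n with
    | zero => intro g hg; simpa using hg
    | succ k ih =>
      intro g hg
      have : (T ^ (k + 1)) g = T ((T ^ k) g) := by
        rw [pow_succ']
        rfl
      rw [this]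
      exact hTpos _ (ih g hg)
  -- summability of the exponential series
  have hsum : Summable fun n : ℕ => (((Nat.factorial n : ℝ))⁻¹) • T ^ n :=
    NormedSpace.expSeries_summable' (𝕂 := ℝ) T
  -- apply evaluation at f
  have hsum' : Summable fun n : ℕ => (((Nat.factorial n : ℝ))⁻¹) • (T ^ n) f := by
    have := (ContinuousLinearMap.apply ℝ (X →ᵇ ℝ) f).summable (f := fun n : ℕ => (((Nat.factorial n : ℝ))⁻¹) • T ^ n) hsum
    simpa using this
  have hexp : NormedSpace.exp T f = ∑' n : ℕ, (((Nat.factorial n : ℝ))⁻¹) • (T ^ n) f := by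
    rw [NormedSpace.exp_eq_tsum (𝕂 := ℝ)]
    have := (ContinuousLinearMap.apply ℝ (X →ᵇ ℝ) f).map_tsum hsum
    simpa using this
  have hterm : ∀ n : ℕ, (0 : X →ᵇ ℝ) ≤ (((Nat.factorial n : ℝ))⁻¹) • (T ^ n) f := by
    intro n
    intro x
    have h1 : (0:ℝ) ≤ (Nat.factorial n : ℝ)⁻¹ := by positivity
    simpa using mul_nonneg h1 (hpow n f hf x)
  have h0 : (((Nat.factorial 0 : ℝ))⁻¹) • (T ^ 0) f = f := by simp
  constructor
  · rw [hexp]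
    have := Summable.le_tsum hsum' 0 (fun j _ => hterm j)
    rwa [h0] at this
  · rw [hexp]
    exact tsum_nonneg hterm
end

section
/- Let E be a real Banach space, S a bounded linear operator on E, and f ∈ E such that the map s ↦ exp(sS) f is Bochner integrable on [0, ∞). Then for every t ≥ 0, exp(tS) (∫₀^∞ exp(sS) f ds) = ∫ₜ^∞ exp(rS) f dr, and consequently ‖exp(tS) (∫₀^∞ exp(sS) f ds)‖ → 0 as t → ∞. (The identity and convergence (45): e^{tSₙ} v⁽ⁿ⁾ = ∫ₜ^∞ e^{rSₙ} f⁽ⁿ⁾_ρ dr → 0.) -/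
set_option maxHeartbeats 1000000
set_option synthInstance.maxHeartbeats 400000


open MeasureTheory

/-- The identity and convergence (45): `e^{tS} ∫₀^∞ e^{sS} f ds = ∫ₜ^∞ e^{rS} f dr`, whose
norm tends to `0` as `t → ∞`. -/
theorem exp_integral_shift_tendsto_zero
    {E : Type*} [NormedAddCommGroup E] [NormedSpace ℝ E] [CompleteSpace E]
    (S : E →L[ℝ] E) (f : E)
    (hInt : IntegrableOn (fun s : ℝ => NormedSpace.exp (s • S) f) (Set.Ici 0)) :
    (∀ t : ℝ, 0 ≤ t →
      NormedSpace.exp (t • S) (∫ s in Set.Ici (0 : ℝ), NormedSpace.exp (s • S) f) =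
        ∫ r in Set.Ici t, NormedSpace.exp (r • S) f) ∧
    Filter.Tendsto
      (fun t : ℝ =>
        ‖NormedSpace.exp (t • S) (∫ s in Set.Ici (0 : ℝ), NormedSpace.exp (s • S) f)‖)
      Filter.atTop (nhds 0) := by
  have key : ∀ t : ℝ,
      NormedSpace.exp (t • S) (∫ s in Set.Ici (0 : ℝ), NormedSpace.exp (s • S) f) =
        ∫ r in Set.Ici t, NormedSpace.exp (r • S) f := by
    intro t
    have h1 : NormedSpace.exp (t • S) (∫ s in Set.Ici (0 : ℝ), NormedSpace.exp (s • S) f)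
        = ∫ s in Set.Ici (0 : ℝ), NormedSpace.exp (t • S) (NormedSpace.exp (s • S) f) :=
      (ContinuousLinearMap.integral_comp_comm _ hInt).symm
    have h2 : ∀ s : ℝ, NormedSpace.exp (t • S) (NormedSpace.exp (s • S) f)
        = NormedSpace.exp ((s + t) • S) f := by
      intro s
      have hc : Commute (t • S) (s • S) := (Commute.refl S).smul_left t |>.smul_right s
      rw [show (s + t) • S = t • S + s • S by rw [add_smul, add_comm]]
      rw [NormedSpace.exp_add_of_commute_of_mem_ball (𝕂 := ℝ) hc
          ((NormedSpace.expSeries_radius_eq_top ℝ (E →L[ℝ] E)).symm ▸ edist_lt_top _ _)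
          ((NormedSpace.expSeries_radius_eq_top ℝ (E →L[ℝ] E)).symm ▸ edist_lt_top _ _)]
      rfl
    have h3 : (∫ s in Set.Ici (0 : ℝ), NormedSpace.exp ((s + t) • S) f)
        = ∫ r in Set.Ici t, NormedSpace.exp (r • S) f := by
      have hmp : MeasurePreserving (fun x : ℝ => x + t) volume volume :=
        measurePreserving_add_right volume t
      have hemb : MeasurableEmbedding (fun x : ℝ => x + t) :=
        (Homeomorph.addRight t).measurableEmbedding
      have hpre : (fun x : ℝ => x + t) ⁻¹' (Set.Ici t) = Set.Ici 0 := by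
        ext x; simp [Set.mem_Ici]
      have h := hmp.setIntegral_preimage_emb hemb
        (fun r => NormedSpace.exp (r • S) f) (Set.Ici t)
      rw [hpre] at h
      exact h
    rw [h1]
    simp_rw [h2]
    exact h3
  refine ⟨fun t _ => key t, ?_⟩
  -- tail integral tends to 0
  have hInt0 : IntegrableOn (fun s : ℝ => NormedSpace.exp (s • S) f) (Set.Ioi 0) :=
    hInt.mono_set Set.Ioi_subset_Ici_self
  have htot : Filter.Tendsto (fun t : ℝ => ∫ s in (0:ℝ)..t, NormedSpace.exp (s • S) f)
      Filter.atTop (nhds (∫ s in Set.Ioi (0:ℝ), NormedSpace.exp (s • S) f)) :=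
    intervalIntegral_tendsto_integral_Ioi 0 hInt0 Filter.tendsto_id
  have heq : ∀ᶠ t : ℝ in Filter.atTop,
      NormedSpace.exp (t • S) (∫ s in Set.Ici (0 : ℝ), NormedSpace.exp (s • S) f)
        = (∫ s in Set.Ioi (0:ℝ), NormedSpace.exp (s • S) f)
          - ∫ s in (0:ℝ)..t, NormedSpace.exp (s • S) f := by
    filter_upwards [Filter.eventually_ge_atTop (0:ℝ)] with t ht
    rw [key t]
    rw [intervalIntegral.integral_of_le ht]
    rw [MeasureTheory.integral_Ici_eq_integral_Ioi]
    have hsplit : (∫ s in Set.Ioi (0:ℝ), NormedSpace.exp (s • S) f)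
        = (∫ s in Set.Ioc (0:ℝ) t, NormedSpace.exp (s • S) f)
          + ∫ s in Set.Ioi t, NormedSpace.exp (s • S) f := by
      rw [← MeasureTheory.setIntegral_union]
      · rw [Set.Ioc_union_Ioi_eq_Ioi ht]
      · exact Set.Ioc_disjoint_Ioi le_rfl
      · exact measurableSet_Ioi
      · exact hInt0.mono_set Set.Ioc_subset_Ioi_self
      · exact hInt0.mono_set (Set.Ioi_subset_Ioi ht)
    rw [hsplit]; abel
  have : Filter.Tendsto (fun t : ℝ =>
      NormedSpace.exp (t • S) (∫ s in Set.Ici (0 : ℝ), NormedSpace.exp (s • S) f))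
      Filter.atTop (nhds 0) := by
    refine Filter.Tendsto.congr' (heq.mono fun t h => h.symm) ?_
    have := (tendsto_const_nhds (α := ℝ)
      (x := (∫ s in Set.Ioi (0:ℝ), NormedSpace.exp (s • S) f))).sub htot
    simpa using this
  simpa using this.norm
end

section
/- Let H > 0 and ρ > 0, and let K : ℕ → ℝ satisfy K(0) = 0 and K(n) ≤ n² H K(n−1) + ρⁿ for all n ≥ 1. Then for all n ≥ 1, K(n) ≤ D Hⁿ (n!)², where D = Σ_{m=1}^∞ (ρ/H)^m / (m!)². (The recurrence argument (43)–(44) establishing the bound k⁽ⁿ⁾_ρ(x₁,…,xₙ) ≤ D Hⁿ (n!)² of Theorem 3.1(i).) -/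
/-- The recurrence argument (43)–(44): if `K 0 = 0` and
`K n ≤ n² H K (n-1) + ρⁿ` for `n ≥ 1`, then `K n ≤ D Hⁿ (n!)²` for all `n ≥ 1`,
where `D = Σ_{m=1}^∞ (ρ/H)^m / (m!)²`. -/
theorem recurrence_bound
    (H ρ : ℝ) (hH : 0 < H) (hρ : 0 < ρ)
    (K : ℕ → ℝ) (hK0 : K 0 = 0)
    (hKrec : ∀ n : ℕ, 1 ≤ n → K n ≤ (n : ℝ) ^ 2 * H * K (n - 1) + ρ ^ n) :
    ∀ n : ℕ, 1 ≤ n →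
      K n ≤ (∑' m : ℕ, (ρ / H) ^ (m + 1) / ((m + 1).factorial : ℝ) ^ 2) *
        H ^ n * ((n.factorial : ℝ)) ^ 2 := by
  set x := ρ / H with hx
  have hx0 : 0 < x := div_pos hρ hH
  set f : ℕ → ℝ := fun m => x ^ (m + 1) / ((m + 1).factorial : ℝ) ^ 2 with hf
  have hfnn : ∀ m, 0 ≤ f m := fun m =>
    div_nonneg (pow_nonneg hx0.le _) (by positivity)
  have hsum : Summable f := by
    have hle : ∀ m : ℕ, f m ≤ |x| ^ (m + 1) / ((m + 1).factorial : ℝ) := by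
      intro m
      have h1 : (1 : ℝ) ≤ ((m + 1).factorial : ℝ) := by
        exact_mod_cast Nat.one_le_iff_ne_zero.2 (m + 1).factorial_ne_zero
      have h2 : ((m + 1).factorial : ℝ) ≤ ((m + 1).factorial : ℝ) ^ 2 := by
        nlinarith
      rw [hf, abs_of_nonneg hx0.le]
      exact div_le_div_of_nonneg_left (pow_nonneg hx0.le _) (by positivity) h2
    exact Summable.of_nonneg_of_le hfnn hle
      ((Real.summable_pow_div_factorial |x|).comp_injective Nat.succ_injective)
  -- partial sums bound the tsum
  have hpartial : ∀ n : ℕ, ∑ m ∈ Finset.range n, f m ≤ ∑' m, f m := fun n =>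
    Summable.sum_le_tsum (Finset.range n) (fun i _ => hfnn i) hsum
  -- key induction: K n ≤ (partial sum n) * H^n * (n!)^2
  have key : ∀ n : ℕ, 1 ≤ n →
      K n ≤ (∑ m ∈ Finset.range n, f m) * H ^ n * ((n.factorial : ℝ)) ^ 2 := by
    intro n hn
    induction n with
    | zero => omega
    | succ k ih =>
      rcases Nat.eq_zero_or_pos k with hk | hk
      · subst hk
        have h1 := hKrec 1 le_rfl
        simp [hK0] at h1
        have heq : (∑ m ∈ Finset.range (0 + 1), f m) * H ^ (0 + 1) *
            (((0 + 1 : ℕ).factorial : ℝ)) ^ 2 = ρ := by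
          simp [hf, hx]
          field_simp
        rw [heq]
        simpa using h1
      · have ih' := ih hk
        have hrec := hKrec (k + 1) (by omega)
        simp only [Nat.add_sub_cancel] at hrec
        have hstep : ((k + 1 : ℕ) : ℝ) ^ 2 * H * K k + ρ ^ (k + 1) ≤
            (∑ m ∈ Finset.range (k + 1), f m) * H ^ (k + 1) *
              (((k + 1).factorial : ℝ)) ^ 2 := by
          rw [Finset.sum_range_succ]
          have hfac : (((k + 1).factorial : ℝ)) = ((k + 1 : ℕ) : ℝ) * (k.factorial : ℝ) := by
            push_cast [Nat.factorial_succ]; ring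
          have hρx : ρ ^ (k + 1) = f k * H ^ (k + 1) * (((k + 1).factorial : ℝ)) ^ 2 := by
            simp only [hf, hx]
            field_simp
            ring_nf
            have hH0 : H ≠ 0 := hH.ne'
            rw [inv_pow]
            field_simp
          have hmul : ((k + 1 : ℕ) : ℝ) ^ 2 * H * K k ≤
              (∑ m ∈ Finset.range k, f m) * H ^ (k + 1) * (((k + 1).factorial : ℝ)) ^ 2 := by
            have h1 : ((k + 1 : ℕ) : ℝ) ^ 2 * H * K k ≤
                ((k + 1 : ℕ) : ℝ) ^ 2 * H *
                  ((∑ m ∈ Finset.range k, f m) * H ^ k * ((k.factorial : ℝ)) ^ 2) := by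
              apply mul_le_mul_of_nonneg_left ih' (by positivity)
            calc ((k + 1 : ℕ) : ℝ) ^ 2 * H * K k ≤ _ := h1
              _ = (∑ m ∈ Finset.range k, f m) * H ^ (k + 1) *
                  (((k + 1).factorial : ℝ)) ^ 2 := by rw [hfac]; ring
          rw [hρx]
          linarith [hmul]
        exact le_trans hrec hstep
  intro n hn
  calc K n ≤ (∑ m ∈ Finset.range n, f m) * H ^ n * ((n.factorial : ℝ)) ^ 2 := key n hn
    _ ≤ (∑' m, f m) * H ^ n * ((n.factorial : ℝ)) ^ 2 := by
        apply mul_le_mul_of_nonneg_right _ (by positivity)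
        apply mul_le_mul_of_nonneg_right (hpartial n) (by positivity)
end
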